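/- arXiv:1201.6048 — 2 statements merged into one kernel-verified Lean document; each statement's English description precedes it below -/
import Mathlib

section
/- For every u ∈ L^1(ℝ^N) ∩ H^r(ℝ^N) with 0 < r < 1 (and r < 1/2 if N = 1), one has ∫ |u|^q dx ≤ C ‖u‖_{L^1}^θ ‖u‖_{H^r}^2, where θ = 2r/N, q = 2 + 2r/N, and C = C(N,r) > 0. -/
open MeasureTheory

abbrev Sp (N : ℕ) := EuclideanSpace ℝ (Fin N)

open Set Metric
open scoped ENNReal

set_option maxHeartbeats 1000000

lemma sqrt_mul_self' {a b : ℝ} (ha : 0 < a) (hb : 0 < b) :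
    Real.sqrt (b / a) * a = Real.sqrt (a * b) := by
  rw [show a * b = b / a * a ^ 2 by field_simp, Real.sqrt_mul (by positivity),
    Real.sqrt_sq ha.le]

lemma aux_zero {a c : ℝ≥0∞} (hc : c ≠ ⊤) (h : ∀ s : ℝ, 0 < s → a ≤ c * ENNReal.ofReal s) : a = 0 := by
  by_contra h0
  rcases eq_or_ne c 0 with rfl | hc0
  · exact h0 (le_antisymm (by simpa using h 1 one_pos) zero_le)
  · have ha : a ≠ ⊤ := by
      intro hE
      have h1 := h 1 one_pos
      have h2 : c * ENNReal.ofReal 1 < ⊤ := ENNReal.mul_lt_top hc.lt_top (by simp)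
      rw [hE] at h1
      exact (h1.trans_lt h2).ne rfl
    set s := a.toReal / (2 * c.toReal) with hs
    have hct : 0 < c.toReal := ENNReal.toReal_pos hc0 hc
    have hat : 0 < a.toReal := ENNReal.toReal_pos h0 ha
    have hspos : 0 < s := by positivity
    have h2 := h s hspos
    have hcalc : c * ENNReal.ofReal s < a := by
      rw [← ENNReal.ofReal_toReal hc, ← ENNReal.ofReal_mul (by positivity)]
      calc ENNReal.ofReal (c.toReal * s) < ENNReal.ofReal a.toReal := by
            apply (ENNReal.ofReal_lt_ofReal_iff hat).2
            rw [hs, show c.toReal * (a.toReal / (2 * c.toReal)) = a.toReal / 2 by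
              field_simp]
            linarith
        _ = a := ENNReal.ofReal_toReal ha
    exact absurd h2 hcalc.not_ge

lemma aux_choose {a b : ℝ≥0∞} (ha0 : a ≠ 0) (ha : a ≠ ⊤) (hb0 : b ≠ 0) (hb : b ≠ ⊤) :
    ∃ s : ℝ, 0 < s ∧ ENNReal.ofReal s * a ≤ (a * b) ^ ((1:ℝ)/2) ∧
      (ENNReal.ofReal s)⁻¹ * b ≤ (a * b) ^ ((1:ℝ)/2) := by
  have hat : 0 < a.toReal := ENNReal.toReal_pos ha0 ha
  have hbt : 0 < b.toReal := ENNReal.toReal_pos hb0 hb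
  have htop : (a * b) ^ ((1:ℝ)/2) ≠ ⊤ := by
    simp [ENNReal.rpow_eq_top_iff, ENNReal.mul_eq_top, ha, hb, ha0, hb0]
  have hsqrt : ((a*b) ^ ((1:ℝ)/2)).toReal = Real.sqrt (a.toReal * b.toReal) := by
    rw [← ENNReal.toReal_rpow, ENNReal.toReal_mul]; exact (Real.sqrt_eq_rpow _).symm
  have hspos : (0:ℝ) < Real.sqrt (b.toReal / a.toReal) := Real.sqrt_pos.2 (by positivity)
  refine ⟨Real.sqrt (b.toReal / a.toReal), hspos, ?_, ?_⟩
  · refine (ENNReal.toReal_le_toReal (by finiteness) htop).1 ?_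
    rw [ENNReal.toReal_mul, ENNReal.toReal_ofReal hspos.le, hsqrt, sqrt_mul_self' hat hbt]
  · refine (ENNReal.toReal_le_toReal (by finiteness) htop).1 ?_
    rw [ENNReal.toReal_mul, ← ENNReal.ofReal_inv_of_pos hspos, ENNReal.toReal_ofReal (by positivity),
      ← Real.sqrt_inv, inv_div, hsqrt, sqrt_mul_self' hbt hat, mul_comm a.toReal]

lemma cheb {α : Type*} [MeasurableSpace α] {μ : Measure α} {f : α → ℝ} (hf : Measurable f)
    {t : ℝ} (ht : 0 < t) :
    μ {x | t < |f x|} ≤ (∫⁻ x, ENNReal.ofReal ((f x)^2) ∂μ) / ENNReal.ofReal (t^2) := by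
  have hsub : {x | t < |f x|} ⊆ {x | ENNReal.ofReal (t^2) ≤ ENNReal.ofReal ((f x)^2)} := by
    intro x hx
    exact ENNReal.ofReal_le_ofReal (by
      have : t^2 ≤ |f x|^2 := pow_le_pow_left₀ ht.le (le_of_lt hx) 2
      simpa [sq_abs] using this)
  refine (ENNReal.le_div_iff_mul_le (Or.inl ?_) (Or.inl ?_)).2 ?_
  · exact (ENNReal.ofReal_pos.2 (by positivity : (0:ℝ) < t^2)).ne'
  · exact ENNReal.ofReal_ne_top
  · rw [mul_comm]
    exact le_trans (mul_le_mul_right (measure_mono hsub) _)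
      (mul_meas_ge_le_lintegral₀ (hf.pow_const 2).ennreal_ofReal.aemeasurable _)

lemma real_calc {νr Bt t r : ℝ} {N : ℕ} (hν : 0 < νr) (hB : 0 < Bt) (ht : 0 < t)
    (hN : 0 < N) (hr : 0 < r) :
    (2*Bt/(νr*(t/2)^2)) ^ (((N:ℝ))⁻¹ * ((N:ℝ) + 2*r)) / Bt
      = (8/νr) ^ (1 + 2*r/(N:ℝ)) * Bt ^ (2*r/(N:ℝ)) * t ^ (-(2 + 4*r/(N:ℝ))) := by
  have hNR : (0:ℝ) < (N:ℝ) := by exact_mod_cast hN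
  set θ : ℝ := 2*r/(N:ℝ) with hθdef
  have hθ : 0 < θ := by positivity
  have hexp : ((N:ℝ))⁻¹ * ((N:ℝ) + 2*r) = 1 + θ := by
    rw [hθdef]; field_simp
  have hRN : 2*Bt/(νr*(t/2)^2) = (8/νr) * (Bt / t^2) := by
    field_simp; ring
  rw [hexp, hRN, Real.mul_rpow (by positivity) (by positivity),
    Real.div_rpow hB.le (by positivity)]
  rw [show (1:ℝ) + θ = θ + 1 by ring, Real.rpow_add hB, Real.rpow_one]
  have h2 : ((t:ℝ)^2) ^ (θ+1) = t ^ ((2:ℝ)*(θ+1)) := by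
    rw [← Real.rpow_natCast t 2, ← Real.rpow_mul ht.le]; norm_num
  rw [h2, show (2:ℝ)*(θ+1) = 2 + 4*r/(N:ℝ) by rw [hθdef]; ring,
    Real.rpow_neg ht.le]
  have hpos := Real.rpow_pos_of_pos ht (2 + 4*r/(N:ℝ))
  field_simp

theorem distrib_bound (N : ℕ) (hN : 0 < N) (r : ℝ) (hr : 0 < r) {v : Sp N → ℝ}
    (hv : Measurable v)
    (hB0 : (∫⁻ x, ENNReal.ofReal ((v x)^2)) ≠ 0)
    (hBt : (∫⁻ x, ENNReal.ofReal ((v x)^2)) ≠ ⊤)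
    {t : ℝ} (ht : 0 < t) :
    volume {x | t < |v x|} ≤
      ENNReal.ofReal ((8 / (volume (ball (0:Sp N) 1)).toReal) ^ (1 + 2*r/(N:ℝ)))
        * (∫⁻ x, ∫⁻ y, ENNReal.ofReal ((v x - v y)^2)
            * (ENNReal.ofReal ‖x - y‖) ^ (-((N:ℝ) + 2*r)))
        * (∫⁻ x, ENNReal.ofReal ((v x)^2)) ^ (2*r/(N:ℝ))
        * ENNReal.ofReal (t ^ (-(2 + 4*r/(N:ℝ)))) := by
  set B : ℝ≥0∞ := ∫⁻ x, ENNReal.ofReal ((v x)^2) with hBdef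
  set F : Sp N → Sp N → ℝ≥0∞ := fun x y => ENNReal.ofReal ((v x - v y)^2)
      * (ENNReal.ofReal ‖x - y‖) ^ (-((N:ℝ) + 2*r)) with hFdef
  set D : ℝ≥0∞ := ∫⁻ x, ∫⁻ y, F x y with hDdef
  set ν : ℝ≥0∞ := volume (ball (0:Sp N) 1) with hνdef
  have hν0 : ν ≠ 0 := (measure_ball_pos _ _ one_pos).ne'
  have hνtop : ν ≠ ⊤ := measure_ball_lt_top.ne
  have hνr : 0 < ν.toReal := ENNReal.toReal_pos hν0 hνtop
  have hBtr : 0 < B.toReal := ENNReal.toReal_pos hB0 hBt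
  have hhalf : 0 < t/2 := by positivity
  set RN : ℝ := 2 * B.toReal / (ν.toReal * (t/2)^2) with hRNdef
  have hRNpos : 0 < RN := by positivity
  set R : ℝ := RN ^ ((N:ℝ))⁻¹ with hRdef
  have hRpos : 0 < R := Real.rpow_pos_of_pos hRNpos _
  have hRpow : R ^ (N:ℕ) = RN := Real.rpow_inv_natCast_pow hRNpos.le hN.ne'
  -- volume of balls
  have hball : ∀ x : Sp N, volume (ball x R) = ENNReal.ofReal RN * ν := by
    intro x
    rw [Measure.addHaar_ball_of_pos _ x hRpos]
    congr 1
    rw [finrank_euclideanSpace_fin, hRpow]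
  have hballval : ENNReal.ofReal RN * ν = 2 * (B / ENNReal.ofReal ((t/2)^2)) := by
    have h1 : RN = (2 * B.toReal / (t/2)^2) / ν.toReal := by rw [hRNdef]; field_simp
    rw [h1, ENNReal.ofReal_div_of_pos hνr, ENNReal.ofReal_toReal hνtop,
      ENNReal.div_mul_cancel hν0 hνtop,
      show 2 * B.toReal / (t/2)^2 = 2 * (B.toReal / (t/2)^2) by ring,
      ENNReal.ofReal_mul (by norm_num), ENNReal.ofReal_ofNat,
      ENNReal.ofReal_div_of_pos (by positivity), ENNReal.ofReal_toReal hBt]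
  set BL : ℝ≥0∞ := B / ENNReal.ofReal ((t/2)^2) with hBLdef
  have hBLtop : BL ≠ ⊤ := (ENNReal.div_lt_top hBt (ENNReal.ofReal_pos.2 (by positivity : (0:ℝ) < (t/2)^2)).ne').ne
  have hBL0 : BL ≠ 0 := by
    rw [hBLdef]
    simp only [ne_eq, ENNReal.div_eq_zero_iff, not_or]
    exact ⟨hB0, ENNReal.ofReal_ne_top⟩
  set G : Set (Sp N) := {y | |v y| ≤ t/2} with hGdef
  have hGmeas : MeasurableSet G := measurableSet_le hv.abs measurable_const
  have hGc : volume {y : Sp N | t/2 < |v y|} ≤ BL := cheb hv hhalf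
  -- lower bound on the good set in each ball
  have hG : ∀ x : Sp N, BL ≤ volume (ball x R ∩ G) := by
    intro x
    have hsub : ball x R ⊆ (ball x R ∩ G) ∪ {y | t/2 < |v y|} := by
      intro y hy
      by_cases h : |v y| ≤ t/2
      · exact Or.inl ⟨hy, h⟩
      · exact Or.inr (not_le.1 h)
    have h1 : BL + BL ≤ volume (ball x R ∩ G) + BL := by
      calc BL + BL = 2 * BL := (two_mul _).symm
        _ = volume (ball x R) := by rw [hball x, hballval]
        _ ≤ volume ((ball x R ∩ G) ∪ {y | t/2 < |v y|}) := measure_mono hsub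
        _ ≤ volume (ball x R ∩ G) + volume {y : Sp N | t/2 < |v y|} := measure_union_le _ _
        _ ≤ volume (ball x R ∩ G) + BL := add_le_add le_rfl hGc
    exact (ENNReal.add_le_add_iff_right hBLtop).1 h1
  set c₀ : ℝ≥0∞ := ENNReal.ofReal ((t/2)^2) * (ENNReal.ofReal R) ^ (-((N:ℝ) + 2*r)) with hc₀def
  set A₂ : Set (Sp N) := {x | t < |v x|} with hA₂def
  -- pointwise lower bound
  have hpoint : ∀ x ∈ A₂, ∀ y ∈ ball x R ∩ G, c₀ ≤ F x y := by
    intro x hx y hy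
    have hd : t/2 ≤ |v x - v y| := by
      have h1 : t < |v x| := hx
      have h2 : |v y| ≤ t/2 := hy.2
      have := abs_sub_abs_le_abs_sub (v x) (v y)
      linarith
    have h1 : ENNReal.ofReal ((t/2)^2) ≤ ENNReal.ofReal ((v x - v y)^2) := by
      apply ENNReal.ofReal_le_ofReal
      have := pow_le_pow_left₀ hhalf.le hd 2
      simpa [sq_abs] using this
    have h2 : (ENNReal.ofReal R) ^ (-((N:ℝ) + 2*r)) ≤ (ENNReal.ofReal ‖x - y‖) ^ (-((N:ℝ) + 2*r)) := by
      rw [ENNReal.rpow_neg, ENNReal.rpow_neg]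
      apply ENNReal.inv_le_inv.2
      apply ENNReal.rpow_le_rpow _ (by positivity)
      apply ENNReal.ofReal_le_ofReal
      have : dist y x < R := hy.1
      rw [dist_eq_norm] at this
      rw [show x - y = -(y - x) by rw [neg_sub], norm_neg]
      exact this.le
    exact mul_le_mul' h1 h2
  -- measurability of F
  have hFmeas : Measurable (Function.uncurry F) := by
    apply Measurable.mul
    · apply Measurable.ennreal_ofReal
      exact ((hv.comp measurable_fst).sub (hv.comp measurable_snd)).pow_const 2
    · exact ENNReal.continuous_rpow_const.measurable.comp
        (measurable_fst.sub measurable_snd).norm.ennreal_ofReal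
  have hFx : ∀ x : Sp N, Measurable (F x) := fun x => hFmeas.comp (measurable_prodMk_left)
  -- chain
  have hinner : ∀ x ∈ A₂, c₀ * BL ≤ ∫⁻ y, F x y := by
    intro x hx
    calc c₀ * BL ≤ c₀ * volume (ball x R ∩ G) := mul_le_mul_right (hG x) _
      _ = ∫⁻ y in ball x R ∩ G, c₀ := (setLIntegral_const _ _).symm
      _ ≤ ∫⁻ y in ball x R ∩ G, F x y := setLIntegral_mono (hFx x) (hpoint x hx)
      _ ≤ ∫⁻ y, F x y := setLIntegral_le_lintegral _ _
  have hchain : volume A₂ * (c₀ * BL) ≤ D := by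
    calc volume A₂ * (c₀ * BL) = (c₀ * BL) * volume A₂ := mul_comm _ _
      _ = ∫⁻ x in A₂, c₀ * BL := (setLIntegral_const _ _).symm
      _ ≤ ∫⁻ x in A₂, ∫⁻ y, F x y := setLIntegral_mono
          (Measurable.lintegral_prod_right hFmeas) hinner
      _ ≤ ∫⁻ x, ∫⁻ y, F x y := setLIntegral_le_lintegral _ _
  -- extract the bound
  have hRof : (0:ℝ≥0∞) < ENNReal.ofReal R := by simpa using hRpos
  have hc₀0 : c₀ ≠ 0 := by
    rw [hc₀def]
    apply mul_ne_zero
    · exact (ENNReal.ofReal_pos.2 (by positivity : (0:ℝ) < (t/2)^2)).ne'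
    · exact (ENNReal.rpow_pos hRof ENNReal.ofReal_ne_top).ne'
  have hc₀top : c₀ ≠ ⊤ := by
    rw [hc₀def]
    apply ENNReal.mul_ne_top ENNReal.ofReal_ne_top
    rw [ENNReal.rpow_neg]
    exact ENNReal.inv_ne_top.2 (ENNReal.rpow_pos hRof ENNReal.ofReal_ne_top).ne'
  have hk0 : c₀ * BL ≠ 0 := mul_ne_zero hc₀0 hBL0
  have hktop : c₀ * BL ≠ ⊤ := ENNReal.mul_ne_top hc₀top hBLtop
  have hvol : volume A₂ ≤ D / (c₀ * BL) :=
    (ENNReal.le_div_iff_mul_le (Or.inl hk0) (Or.inl hktop)).2 hchain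
  set P : ℝ≥0∞ := (ENNReal.ofReal R) ^ (-((N:ℝ) + 2*r)) with hPdef
  have hsq0 : ENNReal.ofReal ((t/2)^2) ≠ 0 := by
    exact (ENNReal.ofReal_pos.2 (by positivity : (0:ℝ) < (t/2)^2)).ne'
  have hkey : c₀ * BL = P * B := by
    rw [hc₀def, hBLdef, div_eq_mul_inv]
    calc ENNReal.ofReal ((t/2)^2) * P * (B * (ENNReal.ofReal ((t/2)^2))⁻¹)
        = P * B * (ENNReal.ofReal ((t/2)^2) * (ENNReal.ofReal ((t/2)^2))⁻¹) := by ring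
      _ = P * B := by rw [ENNReal.mul_inv_cancel hsq0 ENNReal.ofReal_ne_top, mul_one]
  have hP0 : P ≠ 0 := by
    rw [hPdef, ENNReal.rpow_neg]
    exact ENNReal.inv_ne_zero.2 (ENNReal.rpow_ne_top_of_nonneg (by positivity)
      ENNReal.ofReal_ne_top)
  have hPtop : P ≠ ⊤ := by
    rw [hPdef, ENNReal.rpow_neg]
    exact ENNReal.inv_ne_top.2 (ENNReal.rpow_pos hRof ENNReal.ofReal_ne_top).ne'
  have hdiv : D / (c₀ * BL) = D * ((ENNReal.ofReal R) ^ ((N:ℝ) + 2*r) * B⁻¹) := by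
    rw [hkey, div_eq_mul_inv, ENNReal.mul_inv (Or.inl hP0) (Or.inl hPtop), hPdef,
      ENNReal.rpow_neg, inv_inv]
  -- final identification of constants
  have hfact : (ENNReal.ofReal R) ^ ((N:ℝ) + 2*r) * B⁻¹
      = ENNReal.ofReal ((8 / ν.toReal) ^ (1 + 2*r/(N:ℝ)))
        * B ^ (2*r/(N:ℝ)) * ENNReal.ofReal (t ^ (-(2 + 4*r/(N:ℝ)))) := by
    have hLtop : (ENNReal.ofReal R) ^ ((N:ℝ) + 2*r) * B⁻¹ ≠ ⊤ :=
      ENNReal.mul_ne_top (ENNReal.rpow_ne_top_of_nonneg (by positivity) ENNReal.ofReal_ne_top)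
        (ENNReal.inv_ne_top.2 hB0)
    have hRtop : B ^ (2*r/(N:ℝ)) ≠ ⊤ := ENNReal.rpow_ne_top_of_nonneg (by positivity) hBt
    rw [← ENNReal.ofReal_toReal hLtop, ← ENNReal.ofReal_toReal
      (ENNReal.mul_ne_top (ENNReal.mul_ne_top ENNReal.ofReal_ne_top hRtop) ENNReal.ofReal_ne_top)]
    congr 1
    rw [ENNReal.toReal_mul, ENNReal.toReal_mul, ENNReal.toReal_mul, ENNReal.toReal_inv,
      ← ENNReal.toReal_rpow, ← ENNReal.toReal_rpow, ENNReal.toReal_ofReal hRpos.le,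
      ENNReal.toReal_ofReal (Real.rpow_nonneg (by positivity) _),
      ENNReal.toReal_ofReal (Real.rpow_nonneg ht.le _)]
    rw [hRdef, ← Real.rpow_mul hRNpos.le, mul_comm ((N:ℝ)⁻¹) _]
    rw [mul_comm ((N:ℝ) + 2*r) ((N:ℝ))⁻¹, ← div_eq_mul_inv _ B.toReal, hRNdef]
    exact real_calc hνr hBtr ht hN hr
  calc volume A₂ ≤ D / (c₀ * BL) := hvol
    _ = D * ((ENNReal.ofReal R) ^ ((N:ℝ) + 2*r) * B⁻¹) := hdiv
    _ = ENNReal.ofReal ((8 / ν.toReal) ^ (1 + 2*r/(N:ℝ))) * D * B ^ (2*r/(N:ℝ))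
        * ENNReal.ofReal (t ^ (-(2 + 4*r/(N:ℝ)))) := by rw [hfact]; ring

theorem layer_bound (N : ℕ) (hN : 0 < N) (r : ℝ) (hr : 0 < r) {v : Sp N → ℝ}
    (hv : Measurable v)
    (hB0 : (∫⁻ x, ENNReal.ofReal ((v x)^2)) ≠ 0)
    (hBt : (∫⁻ x, ENNReal.ofReal ((v x)^2)) ≠ ⊤)
    {s : ℝ} (hs : 0 < s) :
    (∫⁻ x, ENNReal.ofReal (|v x| ^ (2 + 2*r/(N:ℝ)))) ≤
      ENNReal.ofReal ((2 + 2*r/(N:ℝ)) * (2*r/(N:ℝ))⁻¹) *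
        ((∫⁻ x, ENNReal.ofReal ((v x)^2)) * ENNReal.ofReal s
          + ENNReal.ofReal ((8 / (volume (ball (0:Sp N) 1)).toReal) ^ (1 + 2*r/(N:ℝ)))
            * (∫⁻ x, ∫⁻ y, ENNReal.ofReal ((v x - v y)^2)
                * (ENNReal.ofReal ‖x - y‖) ^ (-((N:ℝ) + 2*r)))
            * (∫⁻ x, ENNReal.ofReal ((v x)^2)) ^ (2*r/(N:ℝ)) * (ENNReal.ofReal s)⁻¹) := by
  have hNR : (0:ℝ) < (N:ℝ) := by exact_mod_cast hN
  set θ : ℝ := 2*r/(N:ℝ) with hθdef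
  have hθ : 0 < θ := by positivity
  set q : ℝ := 2 + θ with hqdef
  have hq : 0 < q := by positivity
  set B : ℝ≥0∞ := ∫⁻ x, ENNReal.ofReal ((v x)^2) with hBdef
  set D : ℝ≥0∞ := ∫⁻ x, ∫⁻ y, ENNReal.ofReal ((v x - v y)^2)
      * (ENNReal.ofReal ‖x - y‖) ^ (-((N:ℝ) + 2*r)) with hDdef
  set c1 : ℝ≥0∞ := ENNReal.ofReal ((8 / (volume (ball (0:Sp N) 1)).toReal) ^ (1 + θ)) with hc1def
  set Λ : ℝ := s ^ θ⁻¹ with hΛdef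
  have hΛpos : 0 < Λ := Real.rpow_pos_of_pos hs _
  have hΛθ : Λ ^ θ = s := Real.rpow_inv_rpow hs.le hθ.ne'
  -- layer cake
  have hlc : (∫⁻ x, ENNReal.ofReal (|v x| ^ q)) =
      ENNReal.ofReal q * ∫⁻ t in Ioi (0:ℝ), volume {a : Sp N | t < |v a|} * ENNReal.ofReal (t ^ (q-1)) :=
    lintegral_rpow_eq_lintegral_meas_lt_mul volume (ae_of_all _ fun x => abs_nonneg _)
      hv.abs.aemeasurable hq
  -- split the t-integral
  have hsplit : (∫⁻ t in Ioi (0:ℝ), volume {a : Sp N | t < |v a|} * ENNReal.ofReal (t ^ (q-1)))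
      = (∫⁻ t in Ioc (0:ℝ) Λ, volume {a : Sp N | t < |v a|} * ENNReal.ofReal (t ^ (q-1)))
        + ∫⁻ t in Ioi Λ, volume {a : Sp N | t < |v a|} * ENNReal.ofReal (t ^ (q-1)) := by
    rw [← lintegral_union measurableSet_Ioi Ioc_disjoint_Ioi_same, Ioc_union_Ioi_eq_Ioi hΛpos.le]
  -- measurability of real rpow
  have hrpowmeas : ∀ c : ℝ, Measurable fun t : ℝ => ENNReal.ofReal (t ^ c) := by
    intro c
    measurability
  -- low part
  have hlow : (∫⁻ t in Ioc (0:ℝ) Λ, volume {a : Sp N | t < |v a|} * ENNReal.ofReal (t ^ (q-1)))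
      ≤ B * ENNReal.ofReal (Λ ^ θ / θ) := by
    have hpt : ∀ t ∈ Ioc (0:ℝ) Λ, volume {a : Sp N | t < |v a|} * ENNReal.ofReal (t ^ (q-1))
        ≤ B * ENNReal.ofReal (t ^ (q-3)) := by
      intro t ht
      have ht0 : 0 < t := ht.1
      have h1 : volume {a : Sp N | t < |v a|} ≤ B / ENNReal.ofReal (t^2) := cheb hv ht0
      calc volume {a : Sp N | t < |v a|} * ENNReal.ofReal (t ^ (q-1))
          ≤ (B / ENNReal.ofReal (t^2)) * ENNReal.ofReal (t ^ (q-1)) := mul_le_mul_left h1 _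
        _ = B * ENNReal.ofReal (t ^ (q-3)) := by
            rw [div_eq_mul_inv, mul_assoc]
            congr 1
            have hexp2 : t ^ (q-1) = t ^ (q-3) * t^2 := by
              rw [show (t:ℝ)^2 = t ^ (2:ℝ) by rw [← Real.rpow_natCast t 2]; norm_num,
                ← Real.rpow_add ht0]
              congr 1
              ring
            rw [hexp2, ENNReal.ofReal_mul (Real.rpow_nonneg ht0.le _)]
            rw [mul_comm (ENNReal.ofReal (t^2))⁻¹ _, mul_assoc,
              ENNReal.mul_inv_cancel (ENNReal.ofReal_pos.2 (by positivity : (0:ℝ) < t^2)).ne'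
                ENNReal.ofReal_ne_top, mul_one]
    calc (∫⁻ t in Ioc (0:ℝ) Λ, volume {a : Sp N | t < |v a|} * ENNReal.ofReal (t ^ (q-1)))
        ≤ ∫⁻ t in Ioc (0:ℝ) Λ, B * ENNReal.ofReal (t ^ (q-3)) :=
          setLIntegral_mono ((hrpowmeas _).const_mul _) hpt
      _ = B * ∫⁻ t in Ioc (0:ℝ) Λ, ENNReal.ofReal (t ^ (q-3)) := lintegral_const_mul _ (hrpowmeas _)
      _ = B * ENNReal.ofReal (Λ ^ θ / θ) := by
          congr 1
          rw [← ofReal_integral_eq_lintegral_ofReal]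
          · congr 1
            rw [← intervalIntegral.integral_of_le hΛpos.le,
              integral_rpow (Or.inl (by rw [hqdef]; linarith))]
            rw [Real.zero_rpow (by rw [hqdef]; intro h; linarith [hθ] : q - 3 + 1 ≠ 0)]
            rw [show q - 3 + 1 = θ by rw [hqdef]; ring]
            simp
          · exact (intervalIntegral.intervalIntegrable_rpow' (by rw [hqdef]; linarith)).1
          · filter_upwards [self_mem_ae_restrict measurableSet_Ioc] with t ht
            exact Real.rpow_nonneg ht.1.le _
  -- high part
  have hhigh : (∫⁻ t in Ioi Λ, volume {a : Sp N | t < |v a|} * ENNReal.ofReal (t ^ (q-1)))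
      ≤ c1 * D * B ^ θ * ENNReal.ofReal (Λ ^ (-θ) / θ) := by
    have hpt : ∀ t ∈ Ioi Λ, volume {a : Sp N | t < |v a|} * ENNReal.ofReal (t ^ (q-1))
        ≤ c1 * D * B ^ θ * ENNReal.ofReal (t ^ (-1-θ)) := by
      intro t ht
      have ht0 : 0 < t := hΛpos.trans ht
      have h1 := distrib_bound N hN r hr hv hB0 hBt ht0
      calc volume {a : Sp N | t < |v a|} * ENNReal.ofReal (t ^ (q-1))
          ≤ (c1 * D * B ^ θ * ENNReal.ofReal (t ^ (-(2 + 4*r/(N:ℝ))))) * ENNReal.ofReal (t ^ (q-1)) :=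
            mul_le_mul_left h1 _
        _ = c1 * D * B ^ θ * ENNReal.ofReal (t ^ (-1-θ)) := by
            rw [mul_assoc, ← ENNReal.ofReal_mul (Real.rpow_nonneg ht0.le _),
              ← Real.rpow_add ht0]
            congr 3
            rw [hqdef, hθdef]; ring
    calc (∫⁻ t in Ioi Λ, volume {a : Sp N | t < |v a|} * ENNReal.ofReal (t ^ (q-1)))
        ≤ ∫⁻ t in Ioi Λ, c1 * D * B ^ θ * ENNReal.ofReal (t ^ (-1-θ)) :=
          setLIntegral_mono ((hrpowmeas _).const_mul _) hpt
      _ = c1 * D * B ^ θ * ∫⁻ t in Ioi Λ, ENNReal.ofReal (t ^ (-1-θ)) :=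
          lintegral_const_mul _ (hrpowmeas _)
      _ = c1 * D * B ^ θ * ENNReal.ofReal (Λ ^ (-θ) / θ) := by
          congr 1
          rw [← ofReal_integral_eq_lintegral_ofReal]
          · congr 1
            rw [integral_Ioi_rpow_of_lt (by linarith) hΛpos]
            rw [show -1 - θ + 1 = -θ by ring]
            rw [div_eq_div_iff (by linarith) hθ.ne']
            ring
          · exact integrableOn_Ioi_rpow_of_lt (by linarith) hΛpos
          · filter_upwards [self_mem_ae_restrict measurableSet_Ioi] with t ht
            exact Real.rpow_nonneg (hΛpos.trans ht).le _
  -- combine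
  calc (∫⁻ x, ENNReal.ofReal (|v x| ^ q))
      = ENNReal.ofReal q * ∫⁻ t in Ioi (0:ℝ), volume {a : Sp N | t < |v a|}
          * ENNReal.ofReal (t ^ (q-1)) := hlc
    _ ≤ ENNReal.ofReal q * (B * ENNReal.ofReal (Λ ^ θ / θ)
          + c1 * D * B ^ θ * ENNReal.ofReal (Λ ^ (-θ) / θ)) := by
        rw [hsplit]; exact mul_le_mul_right (add_le_add hlow hhigh) _
    _ = ENNReal.ofReal (q * θ⁻¹) * (B * ENNReal.ofReal s
          + c1 * D * B ^ θ * (ENNReal.ofReal s)⁻¹) := by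
        rw [Real.rpow_neg hΛpos.le, hΛθ, div_eq_mul_inv, div_eq_mul_inv,
          ENNReal.ofReal_mul hs.le, ENNReal.ofReal_mul (inv_nonneg.2 hs.le),
          ENNReal.ofReal_inv_of_pos hs, ENNReal.ofReal_mul hq.le]
        ring
    _ = ENNReal.ofReal ((2 + 2*r/(N:ℝ)) * (2*r/(N:ℝ))⁻¹) * (B * ENNReal.ofReal s
          + c1 * D * B ^ θ * (ENNReal.ofReal s)⁻¹) := rfl

lemma interp {α : Type*} [MeasurableSpace α] {μ : Measure α} (θ : ℝ) (hθ : 0 < θ)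
    {w : α → ℝ≥0∞} (hw : AEMeasurable w μ) :
    (∫⁻ x, (w x) ^ (2:ℝ) ∂μ) ≤
      (∫⁻ x, w x ∂μ) ^ (θ/(1+θ)) * (∫⁻ x, (w x) ^ (2+θ) ∂μ) ^ (1/(1+θ)) := by
  have h1θ : (0:ℝ) < 1 + θ := by linarith
  have hpq : ((1+θ)/θ).HolderConjugate (1+θ) := by
    rw [Real.holderConjugate_iff]; constructor
    · rw [lt_div_iff₀ hθ]; linarith
    · rw [inv_div, div_add' _ _ _ h1θ.ne']
      field_simp
      ring
  have hH := ENNReal.lintegral_mul_le_Lp_mul_Lq μ hpq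
    (f := fun x => (w x) ^ (θ/(1+θ))) (g := fun x => (w x) ^ ((2+θ)/(1+θ)))
    (hw.pow_const _) (hw.pow_const _)
  have e1 : ∀ x, ((w x) ^ (θ/(1+θ))) * ((w x) ^ ((2+θ)/(1+θ))) = (w x) ^ (2:ℝ) := by
    intro x
    rw [← ENNReal.rpow_add_of_nonneg _ _ (by positivity) (by positivity)]
    congr 1
    field_simp
    ring
  have e2 : ∀ x, ((w x) ^ (θ/(1+θ))) ^ ((1+θ)/θ) = w x := by
    intro x
    rw [← ENNReal.rpow_mul]
    rw [show (θ/(1+θ)) * ((1+θ)/θ) = 1 by field_simp, ENNReal.rpow_one]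
  have e3 : ∀ x, ((w x) ^ ((2+θ)/(1+θ))) ^ ((1+θ):ℝ) = (w x) ^ (2+θ) := by
    intro x
    rw [← ENNReal.rpow_mul]
    congr 1
    field_simp
  have e4 : (1:ℝ)/((1+θ)/θ) = θ/(1+θ) := by field_simp
  calc (∫⁻ x, (w x) ^ (2:ℝ) ∂μ)
      = ∫⁻ x, ((fun x => (w x) ^ (θ/(1+θ))) * fun x => (w x) ^ ((2+θ)/(1+θ))) x ∂μ := by
        apply lintegral_congr
        intro x
        simp only [Pi.mul_apply]
        exact (e1 x).symm
    _ ≤ (∫⁻ x, ((w x) ^ (θ/(1+θ))) ^ ((1+θ)/θ) ∂μ) ^ (1/((1+θ)/θ))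
        * (∫⁻ x, ((w x) ^ ((2+θ)/(1+θ))) ^ ((1+θ):ℝ) ∂μ) ^ (1/(1+θ)) := hH
    _ = (∫⁻ x, w x ∂μ) ^ (θ/(1+θ)) * (∫⁻ x, (w x) ^ (2+θ) ∂μ) ^ (1/(1+θ)) := by
        rw [e4]
        congr 1
        · congr 1
          exact lintegral_congr e2
        · congr 1
          exact lintegral_congr e3

theorem master (N : ℕ) (hN : 0 < N) (r : ℝ) (hr : 0 < r) {v : Sp N → ℝ} (hv : Measurable v)
    (hBt : (∫⁻ x, ENNReal.ofReal ((v x)^2)) ≠ ⊤)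
    (hDt : (∫⁻ x, ∫⁻ y, ENNReal.ofReal ((v x - v y)^2)
        * (ENNReal.ofReal ‖x - y‖) ^ (-((N:ℝ) + 2*r))) ≠ ⊤) :
    (∫⁻ x, ENNReal.ofReal (|v x| ^ (2 + 2*r/(N:ℝ)))) ≤
      ENNReal.ofReal (4 * ((2 + 2*r/(N:ℝ)) * (2*r/(N:ℝ))⁻¹)^2
          * (8 / (volume (ball (0:Sp N) 1)).toReal) ^ (1 + 2*r/(N:ℝ)))
        * (∫⁻ x, ENNReal.ofReal |v x|) ^ (2*r/(N:ℝ))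
        * ((∫⁻ x, ENNReal.ofReal ((v x)^2))
          + (∫⁻ x, ∫⁻ y, ENNReal.ofReal ((v x - v y)^2)
              * (ENNReal.ofReal ‖x - y‖) ^ (-((N:ℝ) + 2*r)))) := by
  have hNR : (0:ℝ) < (N:ℝ) := by exact_mod_cast hN
  set θ : ℝ := 2*r/(N:ℝ) with hθdef
  have hθ : 0 < θ := by positivity
  set B : ℝ≥0∞ := ∫⁻ x, ENNReal.ofReal ((v x)^2) with hBdef
  set D : ℝ≥0∞ := ∫⁻ x, ∫⁻ y, ENNReal.ofReal ((v x - v y)^2)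
      * (ENNReal.ofReal ‖x - y‖) ^ (-((N:ℝ) + 2*r)) with hDdef
  set A : ℝ≥0∞ := ∫⁻ x, ENNReal.ofReal |v x| with hAdef
  set S : ℝ≥0∞ := ∫⁻ x, ENNReal.ofReal (|v x| ^ (2 + θ)) with hSdef
  set K0 : ℝ≥0∞ := ENNReal.ofReal ((2 + θ) * θ⁻¹) with hK0def
  set cν : ℝ := (8 / (volume (ball (0:Sp N) 1)).toReal) ^ (1 + θ) with hcνdef
  have hν : 0 < (volume (ball (0:Sp N) 1)).toReal :=
    ENNReal.toReal_pos (measure_ball_pos _ _ one_pos).ne' measure_ball_lt_top.ne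
  have hcν : 0 < cν := Real.rpow_pos_of_pos (by positivity) _
  have hK0top : K0 ≠ ⊤ := ENNReal.ofReal_ne_top
  have hc1top : ENNReal.ofReal cν ≠ ⊤ := ENNReal.ofReal_ne_top
  -- the target constant
  have hgoal : ∀ (h : S ≤ 4 * K0^2 * ENNReal.ofReal cν * D * A ^ θ), S ≤
      ENNReal.ofReal (4 * ((2 + θ) * θ⁻¹)^2 * cν) * A ^ θ * (B + D) := by
    intro h
    have hconst : (4 : ℝ≥0∞) * K0^2 * ENNReal.ofReal cν
        = ENNReal.ofReal (4 * ((2 + θ) * θ⁻¹)^2 * cν) := by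
      rw [hK0def, show (4:ℝ≥0∞) = ENNReal.ofReal (4:ℝ) by norm_num,
        ← ENNReal.ofReal_pow (by positivity), ← ENNReal.ofReal_mul (by norm_num),
        ← ENNReal.ofReal_mul (by positivity)]
    calc S ≤ 4 * K0^2 * ENNReal.ofReal cν * D * A ^ θ := h
      _ ≤ 4 * K0^2 * ENNReal.ofReal cν * (B + D) * A ^ θ := by
          gcongr
          exact le_add_self
      _ = ENNReal.ofReal (4 * ((2 + θ) * θ⁻¹)^2 * cν) * A ^ θ * (B + D) := by
          rw [hconst]; ring
  -- case B = 0
  rcases eq_or_ne B 0 with hB0 | hB0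
  · have hv0 : ∀ᵐ x : Sp N, ENNReal.ofReal ((v x)^2) = 0 :=
      (lintegral_eq_zero_iff (hv.pow_const 2).ennreal_ofReal).1 hB0
    have hS0 : S = 0 := by
      rw [hSdef, lintegral_eq_zero_iff]
      · filter_upwards [hv0] with x hx
        have : v x = 0 := by
          have := (ENNReal.ofReal_eq_zero).1 hx
          nlinarith [sq_nonneg (v x)]
        simp [this, Real.zero_rpow (by positivity : (2:ℝ) + θ ≠ 0)]
      · measurability
    rw [hS0]
    exact zero_le
  -- now B ≠ 0
  have hlayer : ∀ {s : ℝ}, 0 < s → S ≤ K0 * (B * ENNReal.ofReal s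
      + ENNReal.ofReal cν * D * B ^ θ * (ENNReal.ofReal s)⁻¹) := by
    intro s hs
    have h := layer_bound N hN r hr hv hB0 hBt hs
    rw [hSdef, hBdef, hDdef, hK0def, hcνdef, hθdef]
    exact h
  have hStop : S ≠ ⊤ := by
    have h1 := hlayer one_pos
    simp only [ENNReal.ofReal_one, mul_one, inv_one] at h1
    exact (h1.trans_lt (ENNReal.mul_lt_top hK0top.lt_top (ENNReal.add_lt_top.2
      ⟨hBt.lt_top, ENNReal.mul_lt_top (ENNReal.mul_lt_top hc1top.lt_top hDt.lt_top)
        (ENNReal.rpow_lt_top_of_nonneg hθ.le hBt)⟩))).ne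
  -- case D = 0
  rcases eq_or_ne D 0 with hD0 | hD0
  · have hS0 : S = 0 := by
      apply aux_zero (c := K0 * B) (ENNReal.mul_ne_top hK0top hBt)
      intro s hs
      have h := hlayer hs
      rw [hD0] at h
      simpa [mul_assoc] using h
    rw [hS0]
    exact zero_le
  -- main case
  have hBpos : (0:ℝ≥0∞) < B := zero_lt_iff.mpr hB0
  set b : ℝ≥0∞ := ENNReal.ofReal cν * D * B ^ θ with hbdef
  have hb0 : b ≠ 0 := by
    rw [hbdef]
    exact mul_ne_zero (mul_ne_zero (by simpa using hcν.not_ge) hD0)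
      (ENNReal.rpow_pos hBpos hBt).ne'
  have hbtop : b ≠ ⊤ := ENNReal.mul_ne_top (ENNReal.mul_ne_top hc1top hDt)
    (ENNReal.rpow_ne_top_of_nonneg hθ.le hBt)
  obtain ⟨s, hs, h1, h2⟩ := aux_choose hB0 hBt hb0 hbtop
  have hSb : S ≤ 2 * K0 * (B * b) ^ ((1:ℝ)/2) := by
    calc S ≤ K0 * (B * ENNReal.ofReal s + b * (ENNReal.ofReal s)⁻¹) := hlayer hs
      _ = K0 * (ENNReal.ofReal s * B + (ENNReal.ofReal s)⁻¹ * b) := by ring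
      _ ≤ K0 * ((B * b) ^ ((1:ℝ)/2) + (B * b) ^ ((1:ℝ)/2)) :=
          mul_le_mul_right (add_le_add h1 h2) _
      _ = 2 * K0 * (B * b) ^ ((1:ℝ)/2) := by ring
  -- Hölder interpolation
  have hw : AEMeasurable (fun x : Sp N => ENNReal.ofReal |v x|) volume :=
    hv.abs.ennreal_ofReal.aemeasurable
  have hw2 : ∀ x : Sp N, (ENNReal.ofReal |v x|) ^ (2:ℝ) = ENNReal.ofReal ((v x)^2) := by
    intro x
    rw [ENNReal.ofReal_rpow_of_nonneg (abs_nonneg _) (by norm_num)]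
    congr 1
    rw [show (2:ℝ) = ((2:ℕ):ℝ) by norm_num, Real.rpow_natCast, sq_abs]
  have hwq : ∀ x : Sp N, (ENNReal.ofReal |v x|) ^ (2+θ) = ENNReal.ofReal (|v x| ^ (2+θ)) := by
    intro x
    exact ENNReal.ofReal_rpow_of_nonneg (abs_nonneg _) (by positivity)
  have hinterp : B ≤ A ^ (θ/(1+θ)) * S ^ ((1:ℝ)/(1+θ)) := by
    have h := interp θ hθ hw
    rw [lintegral_congr hw2, lintegral_congr hwq] at h
    exact h
  have hB1θ : B ^ (1+θ) ≤ A ^ θ * S := by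
    calc B ^ (1+θ) ≤ (A ^ (θ/(1+θ)) * S ^ ((1:ℝ)/(1+θ))) ^ (1+θ) :=
          ENNReal.rpow_le_rpow hinterp (by positivity)
      _ = A ^ θ * S := by
          rw [ENNReal.mul_rpow_of_nonneg _ _ (by positivity), ← ENNReal.rpow_mul,
            ← ENNReal.rpow_mul, show θ/(1+θ)*(1+θ) = θ by field_simp,
            show (1:ℝ)/(1+θ)*(1+θ) = 1 by field_simp, ENNReal.rpow_one]
  have hBb : B * b = ENNReal.ofReal cν * D * B ^ ((1:ℝ)+θ) := by
    rw [hbdef, ENNReal.rpow_add_of_nonneg _ _ zero_le_one hθ.le, ENNReal.rpow_one]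
    ring
  set P : ℝ≥0∞ := ENNReal.ofReal cν * D * A ^ θ with hPdef
  have hfinal : S ≤ 2 * K0 * P ^ ((1:ℝ)/2) * S ^ ((1:ℝ)/2) := by
    calc S ≤ 2 * K0 * (B * b) ^ ((1:ℝ)/2) := hSb
      _ ≤ 2 * K0 * (P * S) ^ ((1:ℝ)/2) := by
          have hle : B * b ≤ P * S := by
            rw [hBb, hPdef]
            calc ENNReal.ofReal cν * D * B ^ ((1:ℝ)+θ)
                ≤ ENNReal.ofReal cν * D * (A ^ θ * S) := mul_le_mul_right hB1θ _
              _ = (ENNReal.ofReal cν * D * A ^ θ) * S := by ring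
          exact mul_le_mul_right (ENNReal.rpow_le_rpow hle (by norm_num)) _
      _ = 2 * K0 * P ^ ((1:ℝ)/2) * S ^ ((1:ℝ)/2) := by
          rw [ENNReal.mul_rpow_of_nonneg _ _ (by norm_num)]
          ring
  rcases eq_or_ne S 0 with hS0 | hS0
  · rw [hS0]; exact zero_le
  apply hgoal
  have hhalf : S ^ ((1:ℝ)/2) * S ^ ((1:ℝ)/2) = S := by
    rw [← ENNReal.rpow_add_of_nonneg _ _ (by norm_num) (by norm_num)]
    norm_num
  have hS12ne0 : S ^ ((1:ℝ)/2) ≠ 0 := (ENNReal.rpow_pos (zero_lt_iff.mpr hS0) hStop).ne'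
  have hS12top : S ^ ((1:ℝ)/2) ≠ ⊤ := ENNReal.rpow_ne_top_of_nonneg (by norm_num) hStop
  have hsqrt : S ^ ((1:ℝ)/2) ≤ 2 * K0 * P ^ ((1:ℝ)/2) := by
    apply (ENNReal.mul_le_mul_iff_left hS12ne0 hS12top).1
    rw [hhalf]
    exact hfinal
  have hPh : P ^ ((1:ℝ)/2) * P ^ ((1:ℝ)/2) = P := by
    rw [← ENNReal.rpow_add_of_nonneg _ _ (by norm_num) (by norm_num)]
    norm_num
  calc S = S ^ ((1:ℝ)/2) * S ^ ((1:ℝ)/2) := hhalf.symm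
    _ ≤ (2 * K0 * P ^ ((1:ℝ)/2)) * (2 * K0 * P ^ ((1:ℝ)/2)) := mul_le_mul' hsqrt hsqrt
    _ = 4 * K0^2 * (P ^ ((1:ℝ)/2) * P ^ ((1:ℝ)/2)) := by ring
    _ = 4 * K0^2 * ENNReal.ofReal cν * D * A ^ θ := by rw [hPh, hPdef]; ring

/-- Embedding inequality: `∫ |u|^q ≤ C ‖u‖_{L¹}^θ ‖u‖_{H^r}²` with `θ = 2r/N`, `q = 2 + 2r/N`. -/
theorem stmt4 (N : ℕ) (hN : 0 < N) (r : ℝ) (hr : 0 < r) (hr1 : r < 1)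
    (hN1 : N = 1 → r < 1 / 2) :
    ∃ C : ℝ, 0 < C ∧ ∀ u : Sp N → ℝ,
      Integrable u → Integrable (fun x => (u x) ^ 2) →
      Integrable (fun p : Sp N × Sp N =>
        (u p.1 - u p.2) ^ 2 * ‖p.1 - p.2‖ ^ (-((N : ℝ) + 2 * r))) →
      ∫ x, |u x| ^ ((2 : ℝ) + 2 * r / N) ≤
        C * (∫ x, |u x|) ^ (2 * r / (N : ℝ)) *
          ((∫ x, (u x) ^ 2) + ∫ p : Sp N × Sp N,
            (u p.1 - u p.2) ^ 2 * ‖p.1 - p.2‖ ^ (-((N : ℝ) + 2 * r))) := by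
  have hNR : (0:ℝ) < (N:ℝ) := by exact_mod_cast hN
  have hθ : 0 < 2*r/(N:ℝ) := by positivity
  have hν : 0 < (volume (ball (0:Sp N) 1)).toReal :=
    ENNReal.toReal_pos (measure_ball_pos _ _ one_pos).ne' measure_ball_lt_top.ne
  set C : ℝ := 4 * ((2 + 2*r/(N:ℝ)) * (2*r/(N:ℝ))⁻¹)^2
      * (8 / (volume (ball (0:Sp N) 1)).toReal) ^ (1 + 2*r/(N:ℝ)) with hCdef
  have hC : 0 < C := by
    apply mul_pos (mul_pos (by norm_num) (pow_pos (mul_pos (by positivity) (by positivity)) 2))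
    exact Real.rpow_pos_of_pos (by positivity) _
  refine ⟨C, hC, ?_⟩
  intro u h1 h2 h3
  -- measurable representative
  set v : Sp N → ℝ := h1.1.mk u with hvdef
  have hv : Measurable v := h1.1.stronglyMeasurable_mk.measurable
  have huv : u =ᵐ[volume] v := h1.1.ae_eq_mk
  have hvInt : Integrable v := h1.congr huv
  have hv2eq : (fun x => (u x)^2) =ᵐ[volume] fun x => (v x)^2 := by
    filter_upwards [huv] with x hx; rw [hx]
  have hv2Int : Integrable (fun x => (v x)^2) := h2.congr hv2eq
  -- prod a.e. equality
  have hprod_eq : (fun p : Sp N × Sp N => (u p.1 - u p.2)^2 * ‖p.1 - p.2‖ ^ (-((N:ℝ) + 2*r)))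
      =ᵐ[volume] (fun p : Sp N × Sp N => (v p.1 - v p.2)^2 * ‖p.1 - p.2‖ ^ (-((N:ℝ) + 2*r))) := by
    rw [Measure.volume_eq_prod]
    have hfst : (fun p : Sp N × Sp N => u p.1) =ᵐ[(volume : Measure (Sp N)).prod volume]
        fun p => v p.1 := Measure.quasiMeasurePreserving_fst.ae_eq huv
    have hsnd : (fun p : Sp N × Sp N => u p.2) =ᵐ[(volume : Measure (Sp N)).prod volume]
        fun p => v p.2 := Measure.quasiMeasurePreserving_snd.ae_eq huv
    filter_upwards [hfst, hsnd] with p hp1 hp2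
    rw [hp1, hp2]
  have hvDInt : Integrable (fun p : Sp N × Sp N =>
      (v p.1 - v p.2)^2 * ‖p.1 - p.2‖ ^ (-((N:ℝ) + 2*r))) := h3.congr hprod_eq
  -- nonnegativity facts
  have hFnn : ∀ p : Sp N × Sp N, 0 ≤ (v p.1 - v p.2)^2 * ‖p.1 - p.2‖ ^ (-((N:ℝ) + 2*r)) := by
    intro p
    exact mul_nonneg (sq_nonneg _) (Real.rpow_nonneg (norm_nonneg _) _)
  -- identify lintegrals
  have hA : ENNReal.ofReal (∫ x, |u x|) = ∫⁻ x, ENNReal.ofReal |v x| := by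
    rw [integral_congr_ae (huv.mono fun x hx => by rw [hx])]
    exact ofReal_integral_eq_lintegral_ofReal hvInt.abs (ae_of_all _ fun x => abs_nonneg _)
  have hB : ENNReal.ofReal (∫ x, (u x)^2) = ∫⁻ x, ENNReal.ofReal ((v x)^2) := by
    rw [integral_congr_ae hv2eq]
    exact ofReal_integral_eq_lintegral_ofReal hv2Int (ae_of_all _ fun x => sq_nonneg _)
  -- the ENNReal product integrand
  have hFe : ∀ p : Sp N × Sp N, ENNReal.ofReal ((v p.1 - v p.2)^2 * ‖p.1 - p.2‖ ^ (-((N:ℝ) + 2*r)))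
      = ENNReal.ofReal ((v p.1 - v p.2)^2) * (ENNReal.ofReal ‖p.1 - p.2‖) ^ (-((N:ℝ) + 2*r)) := by
    intro p
    rcases eq_or_ne p.1 p.2 with hp | hp
    · rw [hp]
      have e2 : (0:ℝ) ^ (-((N:ℝ) + 2*r)) = 0 :=
        Real.zero_rpow (neg_lt_zero.2 (by positivity)).ne
      simp [e2]
    · have hpos : 0 < ‖p.1 - p.2‖ := by
        rw [norm_pos_iff, sub_ne_zero]
        exact hp
      rw [ENNReal.ofReal_mul (sq_nonneg _), ENNReal.ofReal_rpow_of_pos hpos]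
  have hD : ENNReal.ofReal (∫ p : Sp N × Sp N, (u p.1 - u p.2)^2 * ‖p.1 - p.2‖ ^ (-((N:ℝ) + 2*r)))
      = ∫⁻ x, ∫⁻ y, ENNReal.ofReal ((v x - v y)^2)
          * (ENNReal.ofReal ‖x - y‖) ^ (-((N:ℝ) + 2*r)) := by
    rw [integral_congr_ae hprod_eq,
      ofReal_integral_eq_lintegral_ofReal hvDInt (ae_of_all _ hFnn)]
    rw [lintegral_congr hFe, Measure.volume_eq_prod]
    apply lintegral_prod
    apply Measurable.aemeasurable
    apply Measurable.mul
    · exact (((hv.comp measurable_fst).sub (hv.comp measurable_snd)).pow_const 2).ennreal_ofReal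
    · exact ENNReal.continuous_rpow_const.measurable.comp
        (measurable_fst.sub measurable_snd).norm.ennreal_ofReal
  -- LHS
  have hS : ∫ x, |u x| ^ ((2:ℝ) + 2*r/(N:ℝ))
      = (∫⁻ x, ENNReal.ofReal (|v x| ^ (2 + 2*r/(N:ℝ)))).toReal := by
    rw [integral_congr_ae (huv.mono fun x hx => by rw [hx])]
    apply integral_eq_lintegral_of_nonneg_ae
    · exact ae_of_all _ fun x => Real.rpow_nonneg (abs_nonneg _) _
    · apply Measurable.aestronglyMeasurable
      measurability
  -- apply master
  have hmaster := master N hN r hr hv (by rw [← hB]; exact ENNReal.ofReal_ne_top)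
    (by rw [← hD]; exact ENNReal.ofReal_ne_top)
  -- convert to reals
  have hRHStop : ENNReal.ofReal C * (∫⁻ x, ENNReal.ofReal |v x|) ^ (2*r/(N:ℝ))
      * ((∫⁻ x, ENNReal.ofReal ((v x)^2)) + (∫⁻ x, ∫⁻ y, ENNReal.ofReal ((v x - v y)^2)
          * (ENNReal.ofReal ‖x - y‖) ^ (-((N:ℝ) + 2*r)))) ≠ ⊤ := by
    apply ENNReal.mul_ne_top (ENNReal.mul_ne_top ENNReal.ofReal_ne_top _)
    · rw [← hB, ← hD]
      exact ENNReal.add_ne_top.2 ⟨ENNReal.ofReal_ne_top, ENNReal.ofReal_ne_top⟩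
    · rw [← hA]
      exact ENNReal.rpow_ne_top_of_nonneg hθ.le ENNReal.ofReal_ne_top
  rw [hS]
  have hle := ENNReal.toReal_mono hRHStop hmaster
  apply hle.trans
  rw [ENNReal.toReal_mul, ENNReal.toReal_mul, ENNReal.toReal_add (by rw [← hB]; exact ENNReal.ofReal_ne_top) (by rw [← hD]; exact ENNReal.ofReal_ne_top)]
  rw [ENNReal.toReal_ofReal hC.le, ← hA, ← hB, ← hD, ← ENNReal.toReal_rpow,
    ENNReal.toReal_ofReal (integral_nonneg fun x => abs_nonneg _),
    ENNReal.toReal_ofReal (integral_nonneg fun x => sq_nonneg _),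
    ENNReal.toReal_ofReal (integral_nonneg (fun p : Sp N × Sp N =>
      mul_nonneg (sq_nonneg _) (Real.rpow_nonneg (norm_nonneg _) _)))]
end

section
/- Let u, φ : ℝ^N → ℝ with u, (u-φ)^+ ∈ H^r(ℝ^N), 0 < r < 1. Writing u_φ^+ = (u-φ)^+ and u_φ^- = (u-φ) ∧ 0 so that u = φ + u_φ^+ + u_φ^-, one has the decomposition B_r(u_φ^+, u) = B_r(u_φ^+, u_φ^+) + B_r(u_φ^+, φ) + B_r(u_φ^+, u_φ^-), and moreover B_r(u_φ^+, u_φ^-) ≥ 0. -/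
open MeasureTheory

/-- Decomposition `B_r(u_φ⁺, u) = B_r(u_φ⁺, u_φ⁺) + B_r(u_φ⁺, φ) + B_r(u_φ⁺, u_φ⁻)`
and nonnegativity of the cross term `B_r(u_φ⁺, u_φ⁻)`. -/
theorem stmt14 (N : ℕ) (hN : 0 < N) (r : ℝ) (hr : 0 < r) (hr1 : r < 1)
    (u φ : Sp N → ℝ)
    (h1 : Integrable (fun p : Sp N × Sp N =>
      (max (u p.1 - φ p.1) 0 - max (u p.2 - φ p.2) 0) * ‖p.1 - p.2‖ ^ (-((N : ℝ) + 2 * r)) *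
        (max (u p.1 - φ p.1) 0 - max (u p.2 - φ p.2) 0)))
    (h2 : Integrable (fun p : Sp N × Sp N =>
      (max (u p.1 - φ p.1) 0 - max (u p.2 - φ p.2) 0) * ‖p.1 - p.2‖ ^ (-((N : ℝ) + 2 * r)) *
        (φ p.1 - φ p.2)))
    (h3 : Integrable (fun p : Sp N × Sp N =>
      (max (u p.1 - φ p.1) 0 - max (u p.2 - φ p.2) 0) * ‖p.1 - p.2‖ ^ (-((N : ℝ) + 2 * r)) *
        (min (u p.1 - φ p.1) 0 - min (u p.2 - φ p.2) 0))) :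
    (∫ p : Sp N × Sp N,
        (max (u p.1 - φ p.1) 0 - max (u p.2 - φ p.2) 0) * ‖p.1 - p.2‖ ^ (-((N : ℝ) + 2 * r)) *
          (u p.1 - u p.2)) =
      (∫ p : Sp N × Sp N,
        (max (u p.1 - φ p.1) 0 - max (u p.2 - φ p.2) 0) * ‖p.1 - p.2‖ ^ (-((N : ℝ) + 2 * r)) *
          (max (u p.1 - φ p.1) 0 - max (u p.2 - φ p.2) 0)) +
      (∫ p : Sp N × Sp N,
        (max (u p.1 - φ p.1) 0 - max (u p.2 - φ p.2) 0) * ‖p.1 - p.2‖ ^ (-((N : ℝ) + 2 * r)) *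
          (φ p.1 - φ p.2)) +
      (∫ p : Sp N × Sp N,
        (max (u p.1 - φ p.1) 0 - max (u p.2 - φ p.2) 0) * ‖p.1 - p.2‖ ^ (-((N : ℝ) + 2 * r)) *
          (min (u p.1 - φ p.1) 0 - min (u p.2 - φ p.2) 0)) ∧
    0 ≤ ∫ p : Sp N × Sp N,
        (max (u p.1 - φ p.1) 0 - max (u p.2 - φ p.2) 0) * ‖p.1 - p.2‖ ^ (-((N : ℝ) + 2 * r)) *
          (min (u p.1 - φ p.1) 0 - min (u p.2 - φ p.2) 0) := by
  constructor
  · have h12 : Integrable (fun p : Sp N × Sp N =>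
      (max (u p.1 - φ p.1) 0 - max (u p.2 - φ p.2) 0) * ‖p.1 - p.2‖ ^ (-((N : ℝ) + 2 * r)) *
        (max (u p.1 - φ p.1) 0 - max (u p.2 - φ p.2) 0) +
      (max (u p.1 - φ p.1) 0 - max (u p.2 - φ p.2) 0) * ‖p.1 - p.2‖ ^ (-((N : ℝ) + 2 * r)) *
        (φ p.1 - φ p.2)) := h1.add h2
    rw [← integral_add h1 h2, ← integral_add h12 h3]
    apply integral_congr_ae
    filter_upwards with p
    have key : u p.1 - u p.2 =
        (max (u p.1 - φ p.1) 0 - max (u p.2 - φ p.2) 0) + (φ p.1 - φ p.2) +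
          (min (u p.1 - φ p.1) 0 - min (u p.2 - φ p.2) 0) := by
      rcases le_total (u p.1 - φ p.1) 0 with h | h <;>
        rcases le_total (u p.2 - φ p.2) 0 with h' | h' <;>
        [rw [max_eq_right h, min_eq_left h, max_eq_right h', min_eq_left h'];
         rw [max_eq_right h, min_eq_left h, max_eq_left h', min_eq_right h'];
         rw [max_eq_left h, min_eq_right h, max_eq_right h', min_eq_left h'];
         rw [max_eq_left h, min_eq_right h, max_eq_left h', min_eq_right h']] <;>
        ring
    rw [key]; ring
  · apply integral_nonneg
    intro p
    dsimp only [Pi.zero_apply]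
    set a := u p.1 - φ p.1
    set b := u p.2 - φ p.2
    have hk : (0:ℝ) ≤ ‖p.1 - p.2‖ ^ (-((N : ℝ) + 2 * r)) :=
      Real.rpow_nonneg (norm_nonneg _) _
    have key : 0 ≤ (max a 0 - max b 0) * (min a 0 - min b 0) := by
      have h1 : max a 0 * min a 0 = 0 := by
        rcases le_total a 0 with h | h
        · rw [max_eq_right h]; ring
        · rw [min_eq_right h]; ring
      have h2 : max b 0 * min b 0 = 0 := by
        rcases le_total b 0 with h | h
        · rw [max_eq_right h]; ring
        · rw [min_eq_right h]; ring
      have h3 : max a 0 * min b 0 ≤ 0 :=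
        mul_nonpos_of_nonneg_of_nonpos (le_max_right _ _) (min_le_right _ _)
      have h4 : max b 0 * min a 0 ≤ 0 :=
        mul_nonpos_of_nonneg_of_nonpos (le_max_right _ _) (min_le_right _ _)
      nlinarith
    nlinarith [mul_nonneg hk key]
end
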